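/- Let ρ be a positive semidefinite complex n × n matrix with Tr ρ ≤ 1 and let τ be a Hermitian complex n × n matrix with Tr τ = 1. Define ρ_R = ρ + (1 − Tr ρ) · I/n. Then Tr((ρ_R − τ)²) ≤ Tr((ρ − τ)²), with equality if and only if Tr ρ = 1 (i.e., if and only if no probability weight is post-selected away). -/

import Mathlib

open Matrix ComplexOrder

/-- For positive semidefinite `ρ` with `Tr ρ ≤ 1` and Hermitian `τ` with `Tr τ = 1`, the
randomized output `ρ_R = ρ + (1 - Tr ρ) I / n` satisfies
`Tr((ρ_R - τ)²) ≤ Tr((ρ - τ)²)`, with equality iff `Tr ρ = 1`. -/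
theorem mse_randomized_le
    {n : ℕ} (hn : 0 < n)
    (ρ τ : Matrix (Fin n) (Fin n) ℂ)
    (hρ : ρ.PosSemidef) (htr : ρ.trace.re ≤ 1)
    (hτ : τ.IsHermitian) (hτtr : τ.trace = 1) :
    (let ρR : Matrix (Fin n) (Fin n) ℂ :=
        ρ + (((1 : ℂ) - ρ.trace) / (n : ℂ)) • (1 : Matrix (Fin n) (Fin n) ℂ);
      ((ρR - τ) * (ρR - τ)).trace.re ≤ ((ρ - τ) * (ρ - τ)).trace.re ∧
        (((ρR - τ) * (ρR - τ)).trace.re = ((ρ - τ) * (ρ - τ)).trace.re ↔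
          ρ.trace = 1)) := by
  intro ρR
  set c : ℂ := ((1 : ℂ) - ρ.trace) / (n : ℂ) with hc
  set A : Matrix (Fin n) (Fin n) ℂ := ρ - τ with hA
  have hR : ρR - τ = A + c • 1 := by
    simp only [ρR, hA]; abel
  have hn' : (n : ℂ) ≠ 0 := by exact_mod_cast hn.ne'
  have htrA : A.trace = -(c * n) := by
    rw [hA, Matrix.trace_sub, hτtr, hc]
    field_simp
    ring
  have hexp : ((ρR - τ) * (ρR - τ)).trace
      = (A * A).trace + 2 * c * A.trace + c ^ 2 * n := by
    rw [hR]
    simp [mul_add, add_mul, Matrix.trace_add, Matrix.smul_mul, Matrix.mul_smul,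
      Matrix.trace_smul, Matrix.trace_one, smul_smul]
    ring
  have hkey : ((ρR - τ) * (ρR - τ)).trace = (A * A).trace - c ^ 2 * n := by
    rw [hexp, htrA]; ring
  -- trace of ρ is real
  have him : ρ.trace.im = 0 := by
    have h1 : ρᴴ.trace = ρ.trace := by rw [hρ.isHermitian]
    have h2 : ρᴴ.trace = starRingEnd ℂ ρ.trace := by
      simp [Matrix.trace, Matrix.conjTranspose_apply, Matrix.diag, map_sum]
    have h3 : starRingEnd ℂ ρ.trace = ρ.trace := by rw [← h2, h1]
    have := congrArg Complex.im h3
    simp at this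
    linarith
  have hρtr : ρ.trace = (ρ.trace.re : ℂ) := by
    exact Complex.ext (by simp) (by simp [him])
  have hcre : c = (((1 - ρ.trace.re) / n : ℝ) : ℂ) := by
    rw [hc, hρtr, ← Complex.ofReal_one, ← Complex.ofReal_natCast,
      ← Complex.ofReal_sub, ← Complex.ofReal_div]
    simp
  have hre : (c ^ 2 * n).re = ((1 - ρ.trace.re) / n) ^ 2 * n := by
    rw [hcre]
    rw [show ((((1 - ρ.trace.re) / n : ℝ) : ℂ)) ^ 2 * (n : ℂ)
        = ((((1 - ρ.trace.re) / n) ^ 2 * n : ℝ) : ℂ) by push_cast; ring]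
    exact Complex.ofReal_re _
  have hnR : (0:ℝ) < (n:ℝ) := by exact_mod_cast hn
  have hnn : (0:ℝ) ≤ ((1 - ρ.trace.re) / n) ^ 2 * n := by positivity
  constructor
  · rw [hkey]
    simp only [Complex.sub_re, hre]
    linarith
  · rw [hkey]
    simp only [Complex.sub_re, hre]
    constructor
    · intro h
      have h0 : ((1 - ρ.trace.re) / n) ^ 2 * n = 0 := by linarith
      have h1 : ((1 - ρ.trace.re) / n) ^ 2 = 0 := by
        rcases mul_eq_zero.mp h0 with h | h
        · exact h
        · exact absurd h hnR.ne'
      have h2 : (1 - ρ.trace.re) / n = 0 := pow_eq_zero_iff (by norm_num) |>.mp h1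
      have h3 : ρ.trace.re = 1 := by
        field_simp at h2; linarith
      rw [hρtr, h3]; norm_num
    · intro h
      have h3 : ρ.trace.re = 1 := by rw [h]; simp
      rw [h3]
      simp
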